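/- Let γ > 0, λ₁ ≥ 0, λ₂ > 0 with λ₁ + λ₂ > 0, and let p, q be probability densities with ⟨p^{1+γ}⟩ < ∞, ⟨q p^γ⟩ < ∞, λ₁ + λ₂⟨q p^γ⟩ > 0 and λ₁ + λ₂⟨p^{1+γ}⟩ > 0. Define ξ(z) = −((1+γ)/(λ₂γ))·log(−λ₂γ z + (λ₁+λ₂)^{1/(1+γ)}) − (1/(λ₂γ))·log(λ₁+λ₂). Then: (a) ξ is strictly increasing on {z : −λ₂γ z + (λ₁+λ₂)^{1/(1+γ)} > 0}; (b) the log-type bridge density power cross-entropy equals ξ applied to the pseudo-spherical-type bridge density power cross-entropy: d̃^{BDP}_{(λ₁,λ₂),γ}(q,p) = ξ(d^{BDP}_{(λ₁,λ₂),γ}(q,p)). In particular the two cross-entropies are equivalent, i.e., they have the same minimizers in p. -/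

import Mathlib

open MeasureTheory Filter Real Topology Set

/-- A probability density w.r.t. a measure `ν`: measurable, nonnegative, integrating to 1. -/
def IsProbDensity {X : Type*} [MeasurableSpace X] (ν : Measure X) (p : X → ℝ) : Prop :=
  Measurable p ∧ (∀ x, 0 ≤ p x) ∧ ∫ x, p x ∂ν = 1

/-- `⟨f^{1+γ}⟩ = ∫ f(x)^{1+γ} dν`. -/
noncomputable def powInt {X : Type*} [MeasurableSpace X] (ν : Measure X) (γ : ℝ) (p : X → ℝ) : ℝ :=
  ∫ x, p x ^ (1 + γ) ∂ν

/-- `⟨q p^γ⟩ = ∫ q(x) p(x)^γ dν`. -/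
noncomputable def crossInt {X : Type*} [MeasurableSpace X] (ν : Measure X) (γ : ℝ)
    (q p : X → ℝ) : ℝ :=
  ∫ x, q x * p x ^ γ ∂ν

/-- `‖f‖_{1+γ} = ⟨f^{1+γ}⟩^{1/(1+γ)}`. -/
noncomputable def lnorm {X : Type*} [MeasurableSpace X] (ν : Measure X) (γ : ℝ) (p : X → ℝ) : ℝ :=
  (powInt ν γ p) ^ (1 / (1 + γ))

/-- The log-type bridge density power cross-entropy:
`d̃^{BDP}_{(λ₁,λ₂),γ}(q,p) = −((1+γ)/(λ₂γ)) log(λ₁+λ₂⟨q p^γ⟩) + (1/λ₂) log(λ₁+λ₂⟨p^{1+γ}⟩)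
  − (1/(λ₂γ)) log(λ₁+λ₂)`. -/
noncomputable def dLogBDP {X : Type*} [MeasurableSpace X] (ν : Measure X) (l1 l2 γ : ℝ)
    (q p : X → ℝ) : ℝ :=
  -((1 + γ) / (l2 * γ)) * Real.log (l1 + l2 * crossInt ν γ q p) +
    (1 / l2) * Real.log (l1 + l2 * powInt ν γ p) - (1 / (l2 * γ)) * Real.log (l1 + l2)


/-- The pseudo-spherical-type bridge density power cross-entropy (PS-type BDPCE). -/
noncomputable def dBDP {X : Type*} [MeasurableSpace X] (ν : Measure X) (l1 l2 γ : ℝ)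
    (q p : X → ℝ) : ℝ :=
  -(1 / (l2 * γ)) * ((l1 + l2 * crossInt ν γ q p) / (l1 + l2 * powInt ν γ p) ^ (γ / (1 + γ)) -
    (l1 + l2) ^ ((1:ℝ) / (1 + γ)))

/-- the map `ξ(z) = −((1+γ)/(λ₂γ)) log(−λ₂γz + (λ₁+λ₂)^{1/(1+γ)})
− (1/(λ₂γ)) log(λ₁+λ₂)` is strictly increasing where its argument is positive, and it
carries the PS-type BDPCE to the log-type BDPCE. -/
theorem log_bdpce_eq_xi_of_ps_bdpce {X : Type*} [MeasurableSpace X] (ν : Measure X)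
    [SigmaFinite ν] (γ l1 l2 : ℝ) (hγ : 0 < γ) (hl1 : 0 ≤ l1) (hl2 : 0 < l2)
    (hl12 : 0 < l1 + l2)
    (p q : X → ℝ) (hp : IsProbDensity ν p) (hq : IsProbDensity ν q)
    (hpI : Integrable (fun x => p x ^ (1 + γ)) ν)
    (hqpI : Integrable (fun x => q x * p x ^ γ) ν)
    (hA : 0 < l1 + l2 * crossInt ν γ q p)
    (hB : 0 < l1 + l2 * powInt ν γ p) :
    let ξ : ℝ → ℝ := fun z =>
      -((1 + γ) / (l2 * γ)) * Real.log (-(l2 * γ * z) + (l1 + l2) ^ ((1:ℝ) / (1 + γ))) -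
        (1 / (l2 * γ)) * Real.log (l1 + l2)
    StrictMonoOn ξ {z | 0 < -(l2 * γ * z) + (l1 + l2) ^ ((1:ℝ) / (1 + γ))} ∧
    dLogBDP ν l1 l2 γ q p = ξ (dBDP ν l1 l2 γ q p) := by
  intro ξ
  have ha : 0 < l2 * γ := mul_pos hl2 hγ
  have hc : 0 < (1 + γ) / (l2 * γ) := div_pos (by linarith) ha
  constructor
  · intro x hx y hy hxy
    simp only [Set.mem_setOf_eq] at hx hy
    have h1 : -(l2 * γ * y) + (l1 + l2) ^ ((1:ℝ) / (1 + γ)) <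
        -(l2 * γ * x) + (l1 + l2) ^ ((1:ℝ) / (1 + γ)) := by nlinarith
    have h2 := Real.log_lt_log hy h1
    have : -((1 + γ) / (l2 * γ)) * Real.log (-(l2 * γ * x) + (l1 + l2) ^ ((1:ℝ) / (1 + γ))) <
        -((1 + γ) / (l2 * γ)) * Real.log (-(l2 * γ * y) + (l1 + l2) ^ ((1:ℝ) / (1 + γ))) := by
      nlinarith [mul_lt_mul_of_pos_left h2 hc]
    simp only [ξ]
    linarith
  · set A := l1 + l2 * crossInt ν γ q p with hAdef
    set B := l1 + l2 * powInt ν γ p with hBdef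
    have hBe : 0 < B ^ (γ / (1 + γ)) := Real.rpow_pos_of_pos hB _
    have key : -(l2 * γ * dBDP ν l1 l2 γ q p) + (l1 + l2) ^ ((1:ℝ) / (1 + γ)) =
        A / B ^ (γ / (1 + γ)) := by
      unfold dBDP
      field_simp
      simp only [← hAdef, ← hBdef]
      ring
      exact mul_inv_cancel_right₀ hBe.ne' A
    simp only [ξ, key]
    rw [Real.log_div (ne_of_gt hA) (ne_of_gt hBe), Real.log_rpow hB]
    unfold dLogBDP
    have h1γ : (1 : ℝ) + γ ≠ 0 := by positivity
    field_simp
    ring
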